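/- arXiv:2411.16108 — 6 statements merged into one kernel-verified Lean document; each statement's English description precedes it below -/
import Mathlib

section
/- Let M and N be additive commutative groups and let F : M → N be a function which is even (F(-x) = F(x) for all x ∈ M) and satisfies the cube relation. Then for all x, y ∈ M and every integer n, F(x + n • y) = (n² − n) • F(y) + n • F(x + y) − (n − 1) • F(x), where • on the right denotes the ℤ-scalar action on N. -/
/-- If `F : M → N` between additive commutative groups is even and satisfies the
cube relation, then `F (x + n • y) = (n² − n) • F y + n • F (x + y) − (n − 1) • F x`
for all `x y : M` and `n : ℤ`. -/
theorem cube_relation_translation_formula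
    {M N : Type*} [AddCommGroup M] [AddCommGroup N] (F : M → N)
    (heven : ∀ x : M, F (-x) = F x)
    (hcube : ∀ x y z : M,
      F (x + y + z) + F x + F y + F z = F (x + y) + F (y + z) + F (x + z)) :
    ∀ (x y : M) (n : ℤ),
      F (x + n • y) = (n ^ 2 - n) • F y + n • F (x + y) - (n - 1) • F x := by
  have h0 : F 0 = 0 := by
    have h := hcube 0 0 0
    simp only [add_zero] at h
    linear_combination (norm := module) h
  -- F (n • y) = n ^ 2 • F y
  have hmul : ∀ (y : M) (n : ℤ), F (n • y) = n ^ 2 • F y := by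
    intro y n
    have key : ∀ n : ℤ, F (n • y) = n ^ 2 • F y ∧ F ((n - 1) • y) = (n - 1) ^ 2 • F y := by
      intro n
      induction n using Int.induction_on with
      | zero =>
        constructor
        · simpa using h0
        · rw [show ((0 : ℤ) - 1) • y = -y by simp, heven]
          module
      | succ n ih =>
        obtain ⟨h1, h2⟩ := ih
        have hrec := hcube ((n : ℤ) • y) y (-y)
        have e4 : (n : ℤ) • y + -y = ((n : ℤ) - 1) • y := by
          rw [sub_smul, one_smul]; abel
        rw [show (n : ℤ) • y + y + -y = (n : ℤ) • y from by abel,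
          show (n : ℤ) • y + y = ((n : ℤ) + 1) • y from by rw [add_smul, one_smul],
          show y + -y = (0 : M) from by abel, e4, heven, h0, h1, h2] at hrec
        refine ⟨?_, ?_⟩
        · linear_combination (norm := module) -hrec
        · rw [show ((n : ℤ) + 1 - 1) = (n : ℤ) from by ring]
          linear_combination (norm := module) h1
      | pred n ih =>
        obtain ⟨h1, h2⟩ := ih
        have hrec := hcube ((-(n : ℤ) - 1) • y) y (-y)
        have e4 : (-(n : ℤ) - 1) • y + -y = (-(n : ℤ) - 1 - 1) • y := by
          rw [sub_smul (-(n : ℤ) - 1) 1, one_smul]; abel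
        rw [show (-(n : ℤ) - 1) • y + y + -y = (-(n : ℤ) - 1) • y from by abel,
          show (-(n : ℤ) - 1) • y + y = (-(n : ℤ)) • y from by
            rw [sub_smul, one_smul, sub_add_cancel],
          show y + -y = (0 : M) from by abel, e4, heven, h0, h1, h2] at hrec
        refine ⟨h2, ?_⟩
        linear_combination (norm := module) -hrec
    exact (key n).1
  intro x y n
  induction n using Int.induction_on with
  | zero => simp
  | succ n ih =>
    have hrec := hcube x ((n : ℤ) • y) y
    have e2 : (n : ℤ) • y + y = ((n : ℤ) + 1) • y := by rw [add_smul, one_smul]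
    rw [show x + (n : ℤ) • y + y = x + ((n : ℤ) + 1) • y from by rw [add_assoc, e2],
      e2, hmul, hmul, ih] at hrec
    linear_combination (norm := module) hrec
  | pred n ih =>
    have hrec := hcube x ((-(n : ℤ) - 1) • y) y
    have e2 : (-(n : ℤ) - 1) • y + y = (-(n : ℤ)) • y := by
      rw [sub_smul, one_smul, sub_add_cancel]
    rw [show x + (-(n : ℤ) - 1) • y + y = x + (-(n : ℤ)) • y from by rw [add_assoc, e2],
      e2, hmul, hmul, ih] at hrec
    linear_combination (norm := module) -hrec
end

section
/- Let M and N be additive commutative groups and let F : M → N be a function which is even (F(-x) = F(x) for all x ∈ M) and satisfies the cube relation. Then F is homogeneous of degree 2 over ℤ: for every x ∈ M and every integer n, F(n • x) = n² • F(x). -/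
/-- If `F : M → N` between additive commutative groups is even and satisfies the
cube relation, then `F` is homogeneous of degree 2 over ℤ: `F (n • x) = n² • F x`. -/
theorem cube_relation_homogeneous_of_degree_two
    {M N : Type*} [AddCommGroup M] [AddCommGroup N] (F : M → N)
    (heven : ∀ x : M, F (-x) = F x)
    (hcube : ∀ x y z : M,
      F (x + y + z) + F x + F y + F z = F (x + y) + F (y + z) + F (x + z)) :
    ∀ (x : M) (n : ℤ), F (n • x) = n ^ 2 • F x := by
  have h0 : F 0 = 0 := by
    have h := hcube 0 0 0
    simp only [add_zero] at h
    exact add_left_cancel (h.trans (add_zero _).symm)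
  intro x n
  have key : ∀ a : M, F (a + x) = 2 • F a + 2 • F x - F (a - x) := by
    intro a
    have h := hcube a x (-x)
    simp only [add_neg_cancel_right, add_sub_cancel_right, add_neg_cancel, h0, heven, ← sub_eq_add_neg,
      add_zero] at h
    rw [two_smul, two_smul, eq_sub_iff_add_eq]
    exact h.symm.trans (by abel)
  have hnat : ∀ m : ℕ, F ((m : ℤ) • x) = ((m : ℤ) ^ 2) • F x := by
    intro m
    induction m using Nat.twoStepInduction with
    | zero => simpa using h0
    | one => simp
    | more k ih1 ih2 =>
      have hk := key (((k : ℤ) + 1) • x)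
      have e1 : ((k : ℤ) + 1) • x + x = ((k : ℤ) + 2) • x := by
        rw [add_smul, add_smul]; abel
      have e2 : ((k : ℤ) + 1) • x - x = (k : ℤ) • x := by
        rw [add_smul]; abel
      rw [e1, e2] at hk
      push_cast
      push_cast at ih1 ih2
      rw [hk, ih1, ih2]
      module
  rcases n.natAbs_eq with h | h
  · rw [h]; exact hnat n.natAbs
  · rw [h, neg_smul, heven, hnat]
    congr 1
    push_cast
    ring
end

section
/- Let M and N be additive commutative groups and let F : M → N be a function which is even (F(-x) = F(x) for all x ∈ M) and satisfies the cube relation. Then for any r ≥ 1, any x₁, …, x_r ∈ M and any integers n₁, …, n_r, one has the polarization identity 2 • F(∑_{i=1}^r nᵢ • xᵢ) = ∑_{i=1}^r ∑_{j=1}^r (nᵢ nⱼ) • (F(xᵢ + xⱼ) − F(xᵢ) − F(xⱼ)). -/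
open Finset

/-- Polarization identity: if `F : M → N` between additive commutative groups is even
and satisfies the cube relation, then for any `r ≥ 1`, `x₁, …, x_r ∈ M` and integers
`n₁, …, n_r`,
`2 • F (∑ i, nᵢ • xᵢ) = ∑ i, ∑ j, (nᵢ nⱼ) • (F (xᵢ + xⱼ) − F xᵢ − F xⱼ)`. -/
theorem cube_relation_polarization_identity
    {M N : Type*} [AddCommGroup M] [AddCommGroup N] (F : M → N)
    (heven : ∀ x : M, F (-x) = F x)
    (hcube : ∀ x y z : M,
      F (x + y + z) + F x + F y + F z = F (x + y) + F (y + z) + F (x + z))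
    (r : ℕ) (hr : 1 ≤ r) (x : Fin r → M) (n : Fin r → ℤ) :
    (2 : ℤ) • F (∑ i, n i • x i) =
      ∑ i, ∑ j, (n i * n j) • (F (x i + x j) - F (x i) - F (x j)) := by
  set B : M → M → N := fun x y => F (x + y) - F x - F y with hBdef
  have hadd : ∀ a b c : M, B (a + b) c = B a c + B b c := by
    intro a b c
    have h := hcube a b c
    have h' : F (a + b + c) = F (a + b) + F (b + c) + F (a + c) - (F a + F b + F c) := by
      rw [eq_sub_iff_add_eq, ← h]; abel
    simp only [hBdef]
    rw [h']; abel
  have hsymm : ∀ a b : M, B a b = B b a := by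
    intro a b; simp only [hBdef, add_comm a b]; abel
  set φ : M → M →+ N := fun z => AddMonoidHom.mk' (fun w => B w z) (fun a b => hadd a b z)
    with hφdef
  have hφ : ∀ z w : M, φ z w = B w z := fun _ _ => rfl
  have hF0 : F 0 = 0 := by
    have h0 : B 0 0 = 0 := (φ 0).map_zero
    simp only [hBdef, add_zero] at h0
    have hneg : -F 0 = 0 := by rw [← h0]; abel
    exact neg_eq_zero.mp hneg
  have h4 : ∀ w : M, F (w + w) = F w + F w + F w + F w := by
    intro w
    have h := hcube w w (-w)
    simp only [add_neg_cancel, add_neg_cancel_right, hF0, heven, add_zero] at h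
    exact h.symm
  set y : M := ∑ i, n i • x i with hy
  have key : ∀ i, ∑ j, (n i * n j) • B (x i) (x j) = n i • φ (x i) y := by
    intro i
    rw [hy, map_sum, Finset.smul_sum]
    refine Finset.sum_congr rfl fun j _ => ?_
    rw [AddMonoidHom.map_zsmul, hφ, mul_smul, hsymm]
  have rhs : ∑ i, ∑ j, (n i * n j) • B (x i) (x j) = B y y := by
    rw [Finset.sum_congr rfl fun i _ => key i]
    have : ∀ i, n i • φ (x i) y = φ y (n i • x i) := by
      intro i
      rw [AddMonoidHom.map_zsmul, hφ, hφ, hsymm]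
    rw [Finset.sum_congr rfl fun i _ => this i, ← map_sum, ← hy, hφ]
  have final : B y y = (2 : ℤ) • F y := by
    simp only [hBdef]
    rw [h4 y, two_zsmul]
    abel
  calc (2 : ℤ) • F y = B y y := final.symm
    _ = ∑ i, ∑ j, (n i * n j) • B (x i) (x j) := rhs.symm
    _ = ∑ i, ∑ j, (n i * n j) • (F (x i + x j) - F (x i) - F (x j)) := rfl
end

section
/- Let V be a finite-dimensional vector space over ℚ and let W be a finite-dimensional vector space over ℝ, equipped with its canonical topology. Let Q : V → W be a quadratic map over ℚ and let Q̃ : ℝ ⊗[ℚ] V → W be the (unique) quadratic map over ℝ with Q̃(1 ⊗ v) = Q(v) for all v ∈ V. If C ⊆ W is a closed subset such that Q(v) ∈ C for every v ∈ V, then Q̃(x) ∈ C for every x ∈ ℝ ⊗[ℚ] V. -/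
open TensorProduct

/-- If a ℚ-quadratic map `Q` from a finite-dimensional ℚ-vector space `V` into a
finite-dimensional real vector space `W` takes values in a closed set `C`, then its
unique ℝ-quadratic extension `Q̃` to `ℝ ⊗[ℚ] V` also takes values in `C`. -/
theorem rat_quadratic_map_real_extension_mem_closed
    (V : Type*) [AddCommGroup V] [Module ℚ V] [FiniteDimensional ℚ V]
    (W : Type*) [NormedAddCommGroup W] [NormedSpace ℝ W] [FiniteDimensional ℝ W]
    [Module ℚ W] [IsScalarTower ℚ ℝ W]
    (Q : V → W)
    (hhom : ∀ (c : ℚ) (v : V), Q (c • v) = c ^ 2 • Q v)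
    (hpolar : ∃ B : V →ₗ[ℚ] V →ₗ[ℚ] W, ∀ v v' : V, B v v' = Q (v + v') - Q v - Q v')
    (Qt : ℝ ⊗[ℚ] V → W)
    (hQt_hom : ∀ (t : ℝ) (x : ℝ ⊗[ℚ] V), Qt (t • x) = t ^ 2 • Qt x)
    (hQt_polar : ∃ B : (ℝ ⊗[ℚ] V) →ₗ[ℝ] (ℝ ⊗[ℚ] V) →ₗ[ℝ] W,
        ∀ x y : ℝ ⊗[ℚ] V, B x y = Qt (x + y) - Qt x - Qt y)
    (hQt_compat : ∀ v : V, Qt ((1 : ℝ) ⊗ₜ[ℚ] v) = Q v)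
    (C : Set W) (hC : IsClosed C) (hQC : ∀ v : V, Q v ∈ C) :
    ∀ x : ℝ ⊗[ℚ] V, Qt x ∈ C := by
  obtain ⟨B, hB⟩ := hQt_polar
  have hQt0 : Qt 0 = 0 := by
    have := hQt_hom 0 0
    simpa using this
  have hadd : ∀ x y : ℝ ⊗[ℚ] V, Qt (x + y) = Qt x + Qt y + B x y := by
    intro x y
    rw [hB x y]; abel
  classical
  set ι := Fin (Module.finrank ℚ V)
  set b : Module.Basis ι ℚ V := Module.finBasis ℚ V
  set e : ι → ℝ ⊗[ℚ] V := fun i => (1 : ℝ) ⊗ₜ[ℚ] b i with he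
  -- continuity of t ↦ Qt (∑ i in s, t i • e i)
  have hcont : ∀ s : Finset ι,
      Continuous (fun t : ι → ℝ => Qt (∑ i ∈ s, t i • e i)) := by
    intro s
    induction s using Finset.induction with
    | empty => simpa [hQt0] using continuous_const
    | @insert a s ha ih =>
      have : (fun t : ι → ℝ => Qt (∑ i ∈ insert a s, t i • e i))
          = fun t : ι → ℝ =>
            (t a) ^ 2 • Qt (e a) + Qt (∑ i ∈ s, t i • e i)
              + t a • ∑ i ∈ s, t i • B (e a) (e i) := by
        funext t
        rw [Finset.sum_insert ha, hadd, hQt_hom]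
        congr 1
        rw [map_smul]
        simp only [LinearMap.smul_apply, map_sum, map_smul, Finset.smul_sum]
        rw [Finset.sum_congr rfl fun i _ => smul_comm (t i) (t a) ((B (e a)) (e i))]
      rw [this]
      apply Continuous.add
      · apply Continuous.add
        · exact (((continuous_apply a).pow 2).smul continuous_const)
        · exact ih
      · apply (continuous_apply a).smul
        apply continuous_finset_sum
        intro i _
        exact (continuous_apply i).smul continuous_const
  have hcontf : Continuous (fun t : ι → ℝ => Qt (∑ i, t i • e i)) := hcont Finset.univ
  -- rational points land in C
  have hrat : ∀ q : ι → ℚ, Qt (∑ i, ((q i : ℝ)) • e i) ∈ C := by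
    intro q
    have : (∑ i, ((q i : ℝ)) • e i) = (1 : ℝ) ⊗ₜ[ℚ] (∑ i, q i • b i) := by
      rw [tmul_sum]
      refine Finset.sum_congr rfl fun i _ => ?_
      rw [he]
      calc ((q i : ℝ)) • ((1:ℝ) ⊗ₜ[ℚ] b i)
          = ((q i : ℝ) • (1:ℝ)) ⊗ₜ[ℚ] b i := by rw [smul_tmul']
        _ = (q i • (1:ℝ)) ⊗ₜ[ℚ] b i := by rw [Rat.smul_one_eq_cast]; norm_num
        _ = (1:ℝ) ⊗ₜ[ℚ] (q i • b i) := smul_tmul _ _ _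
    rw [this, hQt_compat]
    exact hQC _
  -- density argument
  intro x
  have hx : x = ∑ i, (b.baseChange ℝ).repr x i • e i := by
    conv_lhs => rw [← (b.baseChange ℝ).sum_repr x]
    refine Finset.sum_congr rfl fun i _ => ?_
    rw [Module.Basis.baseChange_apply]
  rw [hx]
  set A : Set (ι → ℝ) := (fun t : ι → ℝ => Qt (∑ i, t i • e i)) ⁻¹' C with hA
  have hAclosed : IsClosed A := hC.preimage hcontf
  have hdense : Dense (Set.univ.pi fun _ : ι => Set.range ((↑) : ℚ → ℝ)) :=
    dense_pi Set.univ fun i _ => Rat.denseRange_cast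
  have hsub : (Set.univ.pi fun _ : ι => Set.range ((↑) : ℚ → ℝ)) ⊆ A := by
    intro t ht
    choose q hq using fun i => ht i (Set.mem_univ i)
    have : t = fun i => ((q i : ℝ)) := by
      funext i; exact (hq i).symm
    rw [hA, Set.mem_preimage, this]
    exact hrat q
  have hAuniv : A = Set.univ := (hAclosed.closure_eq).symm.trans (hdense.mono hsub).closure_eq
  exact (Set.eq_univ_iff_forall.mp hAuniv _)
end

section
/- Let r ≥ 1, let M be a symmetric positive semidefinite r×r matrix with real entries, and let c > 0. If det M < (c / (2√r))^r, then there exists a nonzero integer vector μ ∈ ℤ^r (coerced into ℝ^r) such that q_M(μ) < (c / √r) · ‖μ‖², where ‖·‖ is the Euclidean norm on ℝ^r. -/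
open Matrix

/-- If `M` is a symmetric positive semidefinite real `r×r` matrix with
`det M < (c / (2√r))^r` for some `c > 0`, then there is a nonzero integer vector `μ`
with `q_M(μ) < (c / √r) ⬝ ‖μ‖²` (Euclidean norm). -/
theorem exists_int_vector_small_quadratic_value_of_det_small
    (r : ℕ) (hr : 1 ≤ r) (M : Matrix (Fin r) (Fin r) ℝ) (hsymm : M.IsSymm)
    (hpsd : ∀ x : Fin r → ℝ, 0 ≤ x ⬝ᵥ M.mulVec x)
    (c : ℝ) (hc : 0 < c) (hdet : M.det < (c / (2 * Real.sqrt r)) ^ r) :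
    ∃ μ : Fin r → ℤ, μ ≠ 0 ∧
      (fun i => (μ i : ℝ)) ⬝ᵥ M.mulVec (fun i => (μ i : ℝ)) <
        (c / Real.sqrt r) * ∑ i, ((μ i : ℝ)) ^ 2 := by
  have hrpos : (0:ℝ) < (r:ℝ) := by exact_mod_cast hr
  have hsq : 0 < Real.sqrt r := Real.sqrt_pos.2 hrpos
  set α : ℝ := c / (2 * Real.sqrt r) with hαdef
  have hαpos : 0 < α := by positivity
  have hαle : α ≤ c / Real.sqrt r := by
    rw [hαdef, div_le_div_iff₀ (by positivity) hsq]
    nlinarith [hc.le, hsq.le]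
  -- M is Hermitian
  have hM : M.IsHermitian := by
    rw [Matrix.IsHermitian, conjTranspose_eq_transpose_of_trivial]
    exact hsymm
  have hMpsd : M.PosSemidef := Matrix.posSemidef_iff_dotProduct_mulVec.2 ⟨hM, fun x => by simpa using hpsd x⟩
  -- some eigenvalue is < α
  obtain ⟨i, hi⟩ : ∃ i, hM.eigenvalues i < α := by
    by_contra h
    push_neg at h
    have h1 : α ^ r ≤ ∏ i, hM.eigenvalues i := by
      calc α ^ r = ∏ _i : Fin r, α := by simp
        _ ≤ ∏ i, hM.eigenvalues i :=
            Finset.prod_le_prod (fun _ _ => hαpos.le) (fun i _ => h i)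
    have h2 : M.det = ∏ i, hM.eigenvalues i := by
      have := hM.det_eq_prod_eigenvalues
      exact_mod_cast this
    rw [h2] at hdet
    exact absurd (h1.trans_lt hdet) (lt_irrefl _)
  -- the corresponding eigenvector
  set v : Fin r → ℝ := ⇑(hM.eigenvectorBasis i) with hvdef
  have hmul : M *ᵥ v = hM.eigenvalues i • v := hM.mulVec_eigenvectorBasis i
  have hvne : v ≠ 0 := by
    intro h0
    have h1 : ‖hM.eigenvectorBasis i‖ = 1 := hM.eigenvectorBasis.orthonormal.1 i
    have h2 : hM.eigenvectorBasis i = 0 := by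
      ext j
      exact congrFun h0 j
    rw [h2, norm_zero] at h1
    norm_num at h1
  have hvsum : 0 < ∑ j, v j ^ 2 := by
    obtain ⟨j, hj⟩ := Function.ne_iff.1 hvne
    refine Finset.sum_pos' (fun k _ => sq_nonneg _) ⟨j, Finset.mem_univ j, ?_⟩
    rw [sq]
    exact mul_self_pos.2 hj
  have hqv : v ⬝ᵥ M *ᵥ v < α * ∑ j, v j ^ 2 := by
    rw [hmul]
    have : v ⬝ᵥ (hM.eigenvalues i • v) = hM.eigenvalues i * ∑ j, v j ^ 2 := by
      simp [dotProduct, Finset.mul_sum, mul_comm, mul_left_comm, sq]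
    rw [this]
    exact mul_lt_mul_of_pos_right hi hvsum
  -- approximate by a rational vector, using density and openness
  have hcont : Continuous fun x : Fin r → ℝ =>
      x ⬝ᵥ M *ᵥ x - α * ∑ j, x j ^ 2 := by
    simp only [dotProduct, Matrix.mulVec]
    fun_prop
  have hopen : IsOpen {x : Fin r → ℝ | x ⬝ᵥ M *ᵥ x - α * ∑ j, x j ^ 2 < 0} :=
    isOpen_lt hcont continuous_const
  have hdense : Dense (Set.pi Set.univ fun _ : Fin r =>
      Set.range ((↑) : ℚ → ℝ)) :=
    dense_pi Set.univ fun _ _ => Rat.denseRange_cast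
  obtain ⟨x, hxq, hxU⟩ := hdense.exists_mem_open hopen
    ⟨v, by simpa using hqv⟩
  choose w hw using fun j => hxq j (Set.mem_univ j)
  have hxw : x = fun j => ((w j : ℝ)) := by
    funext j; exact (hw j).symm
  have hxlt : x ⬝ᵥ M *ᵥ x < α * ∑ j, x j ^ 2 := by
    have := hxU
    simp only [Set.mem_setOf_eq] at this
    linarith
  have hxne : x ≠ 0 := by
    intro h0
    rw [h0] at hxlt
    simp at hxlt
  -- clear denominators
  set D : ℕ := ∏ j, (w j).den with hDdef
  have hDpos : 0 < D := Finset.prod_pos fun j _ => (w j).pos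
  have hdvd : ∀ j, (w j).den ∣ D := fun j =>
    Finset.dvd_prod_of_mem _ (Finset.mem_univ j)
  refine ⟨fun j => (w j).num * ((D / (w j).den : ℕ) : ℤ), ?_, ?_⟩
  · -- nonzero
    obtain ⟨j, hj⟩ := Function.ne_iff.1 hxne
    have hwj : w j ≠ 0 := by
      intro h0
      apply hj
      rw [hxw]
      simp [h0]
    have hnum : (w j).num ≠ 0 := Rat.num_ne_zero.2 hwj
    have hquot : (D / (w j).den : ℕ) ≠ 0 := by
      have : 0 < D / (w j).den := Nat.div_pos (Nat.le_of_dvd hDpos (hdvd j)) (w j).pos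
      omega
    intro h0
    have := congrFun h0 j
    simp only [Pi.zero_apply, mul_eq_zero] at this
    rcases this with h | h
    · exact hnum h
    · exact hquot (by exact_mod_cast h)
  · -- the inequality
    have hcast' : ∀ j, (((w j).num * ((D / (w j).den : ℕ) : ℤ) : ℤ) : ℝ)
        = (D : ℝ) * x j := by
      intro j
      have hden : ((w j).den : ℝ) ≠ 0 := by
        exact_mod_cast (w j).pos.ne'
      have h1 : ((D / (w j).den : ℕ) : ℝ) = (D : ℝ) / ((w j).den : ℝ) :=
        Nat.cast_div (hdvd j) hden
      rw [Int.cast_mul, Int.cast_natCast, h1, ← hw j, Rat.cast_def]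
      field_simp
    simp only [hcast']
    have hq : (fun i => (D:ℝ) * x i) ⬝ᵥ M *ᵥ (fun i => (D:ℝ) * x i)
        = (D : ℝ) ^ 2 * (x ⬝ᵥ M *ᵥ x) := by
      have e1 : (fun i => (D:ℝ) * x i) = (D:ℝ) • x := rfl
      rw [e1, Matrix.mulVec_smul, smul_dotProduct, dotProduct_smul]
      simp only [smul_eq_mul]
      ring
    have hs : ∑ i, ((D:ℝ) * x i) ^ 2 = (D : ℝ) ^ 2 * ∑ j, x j ^ 2 := by
      simp [mul_pow, Finset.mul_sum]
    rw [hq, hs]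
    have hDR : (0:ℝ) < (D:ℝ)^2 := by positivity
    have hsumnn : 0 ≤ ∑ j, x j ^ 2 :=
      Finset.sum_nonneg fun j _ => sq_nonneg _
    have hkey : x ⬝ᵥ M *ᵥ x < (c / Real.sqrt r) * ∑ j, x j ^ 2 :=
      hxlt.trans_le (mul_le_mul_of_nonneg_right hαle hsumnn)
    calc (D:ℝ)^2 * (x ⬝ᵥ M *ᵥ x) < (D:ℝ)^2 * ((c / Real.sqrt r) * ∑ j, x j ^ 2) :=
          mul_lt_mul_of_pos_left hkey hDR
      _ = (c / Real.sqrt r) * ((D:ℝ)^2 * ∑ j, x j ^ 2) := by ring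
end

section
/- Let V be a finite-dimensional real normed vector space, let Λ ⊆ V be an additive subgroup whose ℝ-linear span is all of V, and let U ⊆ V be an open subset that is closed under multiplication by positive real scalars (c • U ⊆ U for every real c > 0). Then every x ∈ U can be written as a finite positive linear combination of elements of Λ ∩ U: there are k ≥ 1, elements v₁, …, v_k ∈ Λ ∩ U and real numbers c₁, …, c_k > 0 with x = ∑_{i=1}^k cᵢ • vᵢ. -/
/-- In a finite-dimensional real normed vector space `V`, if `Λ` is an additive subgroup
spanning `V` over ℝ and `U` is an open subset stable under positive scaling, then every
point of `U` is a finite positive linear combination of elements of `Λ ∩ U`. -/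
theorem mem_open_cone_eq_pos_comb_of_lattice_points
    (V : Type*) [NormedAddCommGroup V] [NormedSpace ℝ V] [FiniteDimensional ℝ V]
    (Λ : AddSubgroup V) (hspan : Submodule.span ℝ (Λ : Set V) = ⊤)
    (U : Set V) (hU : IsOpen U)
    (hcone : ∀ c : ℝ, 0 < c → ∀ x ∈ U, c • x ∈ U) :
    ∀ x ∈ U, ∃ (k : ℕ), 1 ≤ k ∧ ∃ (v : Fin k → V) (c : Fin k → ℝ),
      (∀ i, v i ∈ Λ) ∧ (∀ i, v i ∈ U) ∧ (∀ i, 0 < c i) ∧ x = ∑ i, c i • v i := by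
  -- Extract a basis of `V` consisting of elements of `Λ`.
  obtain ⟨b, hbΛ, hbspan, hbli⟩ := exists_linearIndependent ℝ (Λ : Set V)
  rw [hspan] at hbspan
  have hbfin : b.Finite := hbli.set_finite_of_isNoetherian
  haveI : Fintype b := hbfin.fintype
  let B : Module.Basis b ℝ V := Module.Basis.mk hbli (by rw [Subtype.range_coe]; exact hbspan.ge)
  set R : ℝ := ∑ j : b, ‖(j : V)‖ with hR
  -- The set of finite positive combinations of elements of `Λ ∩ U`.
  set P : Set V := {y : V | ∃ (k : ℕ), 1 ≤ k ∧ ∃ (v : Fin k → V) (c : Fin k → ℝ),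
      (∀ i, v i ∈ Λ) ∧ (∀ i, v i ∈ U) ∧ (∀ i, 0 < c i) ∧ y = ∑ i, c i • v i} with hP
  -- `P` is convex.
  have hPconv : Convex ℝ P := by
    intro y hy z hz a a' ha ha' haa'
    rcases ha.eq_or_lt with rfl | ha
    · have : a' = 1 := by linarith
      simpa [this] using hz
    rcases ha'.eq_or_lt with rfl | ha'
    · have : a = 1 := by linarith
      simpa [this] using hy
    obtain ⟨k, hk, v, c, hvΛ, hvU, hc, hy⟩ := hy
    obtain ⟨l, hl, w, d, hwΛ, hwU, hd, hz⟩ := hz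
    refine ⟨k + l, by omega, Fin.append v w, Fin.append (fun i => a * c i) (fun i => a' * d i),
      ?_, ?_, ?_, ?_⟩
    · intro i
      refine Fin.addCases (fun i => ?_) (fun i => ?_) i <;>
        simp [Fin.append_left, Fin.append_right, hvΛ, hwΛ]
    · intro i
      refine Fin.addCases (fun i => ?_) (fun i => ?_) i <;>
        simp [Fin.append_left, Fin.append_right, hvU, hwU]
    · intro i
      refine Fin.addCases (fun i => ?_) (fun i => ?_) i
      · simpa only [Fin.append_left] using mul_pos ha (hc i)
      · simpa only [Fin.append_right] using mul_pos ha' (hd i)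
    · rw [Fin.sum_univ_add]
      simp only [Fin.append_left, Fin.append_right]
      rw [hy, hz, Finset.smul_sum, Finset.smul_sum]
      simp [mul_smul]
  -- `P` is dense in `U`.
  have hPdense : U ⊆ closure P := by
    intro y hy
    rw [Metric.mem_closure_iff]
    intro ρ hρ
    obtain ⟨ρ₀, hρ₀, hball⟩ := Metric.isOpen_iff.1 hU y hy
    set ρ' : ℝ := min ρ ρ₀ with hρ'
    have hρ'pos : 0 < ρ' := lt_min hρ hρ₀
    have hball' : Metric.ball y ρ' ⊆ U := fun z hz =>
      hball (Metric.ball_subset_ball (min_le_right _ _) hz)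
    obtain ⟨N, hN⟩ := exists_nat_gt (R / ρ')
    set M : ℕ := N + 1 with hM
    have hMpos : (0 : ℝ) < M := by positivity
    have hRM : R < M * ρ' := by
      have : R / ρ' < M := lt_of_lt_of_le hN (by exact_mod_cast Nat.le_succ N)
      calc R = R / ρ' * ρ' := by field_simp
        _ < M * ρ' := by exact mul_lt_mul_of_pos_right this hρ'pos
    set y' : V := (M : ℝ) • y with hy'
    set v : V := ∑ j : b, (⌊B.repr y' j⌋ : ℝ) • (j : V) with hv
    have hvΛ : v ∈ Λ := by
      refine Submodule.sum_mem (Λ.toIntSubmodule) fun j _ => ?_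
      rw [Int.cast_smul_eq_zsmul]
      exact zsmul_mem (hbΛ j.2) _
    have hdist : ‖y' - v‖ ≤ R := by
      have hrepr : y' = ∑ j : b, B.repr y' j • (j : V) := by
        have h := B.sum_repr y'
        simp only [B, Module.Basis.coe_mk] at h
        exact h.symm
      have : y' - v = ∑ j : b, Int.fract (B.repr y' j) • (j : V) := by
        conv_lhs => rw [hrepr, hv]
        rw [← Finset.sum_sub_distrib]
        refine Finset.sum_congr rfl fun j _ => ?_
        rw [← sub_smul, Int.self_sub_floor]
      rw [this]
      calc ‖∑ j : b, Int.fract (B.repr y' j) • (j : V)‖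
          ≤ ∑ j : b, ‖Int.fract (B.repr y' j) • (j : V)‖ := norm_sum_le _ _
        _ ≤ ∑ j : b, ‖(j : V)‖ := by
            refine Finset.sum_le_sum fun j _ => ?_
            rw [norm_smul, Real.norm_eq_abs,
              abs_of_nonneg (Int.fract_nonneg _)]
            exact mul_le_of_le_one_left (norm_nonneg _) (Int.fract_lt_one _).le
        _ = R := rfl
    set p : V := (M : ℝ)⁻¹ • v with hp
    have hyp : dist y p < ρ' := by
      have : y - p = (M : ℝ)⁻¹ • (y' - v) := by
        rw [smul_sub, hy', hp, inv_smul_smul₀ hMpos.ne']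
      rw [dist_eq_norm, this, norm_smul, Real.norm_eq_abs, abs_of_pos (by positivity)]
      calc (M : ℝ)⁻¹ * ‖y' - v‖ ≤ (M : ℝ)⁻¹ * R := by
            exact mul_le_mul_of_nonneg_left hdist (by positivity)
        _ < ρ' := by
            rw [inv_mul_lt_iff₀ hMpos]
            exact hRM
    have hpU : p ∈ U := hball' (by simpa [Metric.mem_ball, dist_comm] using hyp)
    have hvU : v ∈ U := by
      have := hcone (M : ℝ) hMpos p hpU
      rwa [hp, smul_inv_smul₀ hMpos.ne'] at this
    refine ⟨p, ?_, lt_of_lt_of_le hyp (min_le_left _ _)⟩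
    exact ⟨1, le_refl 1, fun _ => v, fun _ => (M : ℝ)⁻¹, fun _ => hvΛ, fun _ => hvU,
      fun _ => by positivity, by simp [hp]⟩
  -- Main argument.
  intro x hx
  have hPspan : affineSpan ℝ P = ⊤ := by
    have hclP : closure P ⊆ (affineSpan ℝ P : Set V) :=
      closure_minimal (subset_affineSpan ℝ P) (affineSpan ℝ P).closed_of_finiteDimensional
    have hUP : U ⊆ (affineSpan ℝ P : Set V) := hPdense.trans hclP
    have h2 : affineSpan ℝ U ≤ affineSpan ℝ P := affineSpan_le.2 hUP
    rw [hU.affineSpan_eq_top ⟨x, hx⟩] at h2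
    exact eq_top_iff.2 h2
  obtain ⟨y₀, hy₀⟩ := hPconv.interior_nonempty_iff_affineSpan_eq_top.2 hPspan
  -- Choose a point `x'` slightly beyond `x` on the ray from `y₀` through `x`.
  obtain ⟨ε, hε, hballx⟩ := Metric.isOpen_iff.1 hU x hx
  set t : ℝ := ε / (2 * (‖x - y₀‖ + 1)) with ht
  have htpos : 0 < t := by positivity
  set x' : V := x + t • (x - y₀) with hx'
  have hx'U : x' ∈ U := by
    apply hballx
    rw [Metric.mem_ball, dist_eq_norm]
    have : x' - x = t • (x - y₀) := by rw [hx']; abel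
    rw [this, norm_smul, Real.norm_eq_abs, abs_of_pos htpos, ht]
    have h1 : ‖x - y₀‖ < ‖x - y₀‖ + 1 := lt_add_one _
    have h2 : (0:ℝ) < ‖x - y₀‖ + 1 := by positivity
    calc ε / (2 * (‖x - y₀‖ + 1)) * ‖x - y₀‖
        ≤ ε / (2 * (‖x - y₀‖ + 1)) * (‖x - y₀‖ + 1) := by
          exact mul_le_mul_of_nonneg_left h1.le (by positivity)
      _ = ε / 2 := by field_simp
      _ < ε := by linarith
  -- `x` lies in the open segment from `y₀` to `x'`.
  have hseg : x ∈ openSegment ℝ y₀ x' := by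
    have h1t : (1 + t) ≠ 0 := by positivity
    refine ⟨t / (1 + t), 1 / (1 + t), by positivity, by positivity, ?_, ?_⟩
    · field_simp
      ring
    · rw [hx']
      match_scalars <;> field_simp <;> ring
  have hxP : x ∈ P :=
    interior_subset (hPconv.openSegment_interior_closure_subset_interior hy₀ (hPdense hx'U) hseg)
  exact hxP
end
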